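/- Let F : ℕ → A be an arbitrary sequence, representing the formal power series Σ_{n=0}^{∞} F(n)·x^n in the skew power series ring A[[x; σ̃]]. Then for every sequence G : ℕ → A and every m ∈ ℕ one has Σ_{k=0}^{m} F(k)·σ̃^k(G(m−k)) = Σ_{k=0}^{m} G(k)·σ̃^k(F(m−k)) (i.e. the power series lies in the center of A[[x; σ̃]]) if and only if for every n ∈ ℕ, F(n) vanishes on Sep^n(X) and σ̃(F(n)) = F(n). -/

import Mathlib

theorem stmt15 (n : ℕ) (hn : 1 ≤ n) (σ : Equiv.Perm (Fin n))
    (F : ℕ → Fin n → ℝ) :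
    (∀ (G : ℕ → Fin n → ℝ) (m : ℕ),
        ∑ k ∈ Finset.range (m + 1), F k * (G (m - k) ∘ ⇑(σ ^ k).symm) =
          ∑ k ∈ Finset.range (m + 1), G k * (F (m - k) ∘ ⇑(σ ^ k).symm)) ↔
      (∀ k : ℕ, (∀ x : Fin n, (σ ^ k) x ≠ x → F k x = 0) ∧ F k ∘ ⇑σ.symm = F k) := by
  constructor
  · intro h k
    have hB : F k ∘ ⇑σ.symm = F k := by
      have h1 := h (fun i => if i = 1 then (1 : Fin n → ℝ) else 0) (k + 1)
      rw [Finset.sum_eq_single k, Finset.sum_eq_single 1] at h1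
      · funext x
        have h2 : F k x = F k (σ.symm x) := by simpa using congrFun h1 x
        exact h2.symm
      all_goals
        first
          | (intro hk; exact absurd (Finset.mem_range.mpr (by omega)) hk)
          | (intro b hb hne
             rw [Finset.mem_range] at hb
             first
               | (rw [if_neg hne]; funext y; simp)
               | (rw [if_neg (show k + 1 - b ≠ 1 by omega)]; funext y; simp))
    refine ⟨?_, hB⟩
    intro x hx
    have hsx : (σ ^ k).symm x ≠ x := by
      intro hc
      exact hx ((Equiv.symm_apply_eq _).mp hc).symm
    have h1 := h (fun i => if i = 0 then (fun y => if y = x then (1 : ℝ) else 0) else 0) k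
    rw [Finset.sum_eq_single k, Finset.sum_eq_single 0] at h1
    · have h2 : (0 : ℝ) = F k x := by simpa [hsx, show (Equiv.symm (1 : Equiv.Perm (Fin n))) x = x from rfl] using congrFun h1 x
      exact h2.symm
    all_goals
      first
        | (intro hk; exact absurd (Finset.mem_range.mpr (by omega)) hk)
        | (intro b hb hne
           rw [Finset.mem_range] at hb
           first
             | (rw [if_neg hne]; funext y; simp)
             | (rw [if_neg (show k - b ≠ 0 by omega)]; funext y; simp))
  · intro h G m
    have hinv : ∀ (k j : ℕ) (x : Fin n), F k ((σ ^ j).symm x) = F k x := by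
      intro k j
      induction j with
      | zero => intro x; simp; rfl
      | succ j ih =>
        intro x
        have hstep : (σ ^ (j + 1)).symm x = σ.symm ((σ ^ j).symm x) := by
          rw [pow_succ]; rfl
        rw [hstep]
        have h2 := congrFun (h k).2 ((σ ^ j).symm x)
        simp only [Function.comp_apply] at h2
        rw [h2, ih]
    have hrefl := Finset.sum_range_reflect
      (fun k => G k * (F (m - k) ∘ ⇑(σ ^ k).symm)) (m + 1)
    simp only [Nat.add_sub_cancel] at hrefl
    rw [← hrefl]
    apply Finset.sum_congr rfl
    intro k hk
    rw [Finset.mem_range] at hk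
    have hkm : k ≤ m := by omega
    rw [Nat.sub_sub_self hkm]
    funext x
    simp only [Pi.mul_apply, Function.comp_apply]
    rw [hinv k (m - k) x]
    by_cases hfix : (σ ^ k) x = x
    · have : (σ ^ k).symm x = x := (Equiv.symm_apply_eq _).mpr hfix.symm
      rw [this, mul_comm]
    · rw [(h k).1 x hfix, zero_mul, mul_zero]
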